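/- (Deterministic one-step contraction of the averaged iterate.) Let f_1, …, f_n : ℝ^d → ℝ be convex and L-smooth, let f = (1/n)∑_{i=1}^n f_i, and let x* be a global minimizer of f. If 0 < γ < 1/(4L), then for any points x_1, …, x_n ∈ ℝ^d with average x̄ = (1/n)∑_i x_i, ‖x̄ − x* − (γ/n)·∑_{i=1}^n ∇f_i(x_i)‖² ≤ ‖x̄ − x*‖² − γ·(f(x̄) − f(x*)) + (3·γ·L/(2n))·∑_{i=1}^n ‖x̄ − x_i‖². -/

import Mathlib

open Finset

section Aux
variable {E : Type*} [NormedAddCommGroup E] [InnerProductSpace ℝ E] [CompleteSpace E]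

lemma line_hasDerivAt (f : E → ℝ) (x u : E) (t : ℝ) {g : E}
    (hf : HasGradientAt f g (x + t • u)) :
    HasDerivAt (fun s : ℝ => f (x + s • u)) (inner ℝ g u : ℝ) t := by
  have hc : HasDerivAt (fun s : ℝ => x + s • u) u t := by
    simpa using ((hasDerivAt_id t).smul_const u).const_add x
  have h := (hf.hasFDerivAt).comp_hasDerivAt t hc
  simpa [InnerProductSpace.toDual_apply_apply, Function.comp_def] using h

lemma convex_grad_ineq (f : E → ℝ) (hconv : ConvexOn ℝ Set.univ f) (x y g : E)
    (hg : HasGradientAt f g x) : f x + (inner ℝ g (y - x) : ℝ) ≤ f y := by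
  have hg' : HasGradientAt f g (x + (0:ℝ) • (y - x)) := by simpa using hg
  have hd := line_hasDerivAt f x (y - x) 0 hg'
  have hφ : ConvexOn ℝ Set.univ (fun s : ℝ => f (x + s • (y - x))) := by
    have := hconv.comp_affineMap (AffineMap.lineMap x y : ℝ →ᵃ[ℝ] E)
    simp only [Set.preimage_univ] at this
    convert this using 2 with s
    iterate 4 rfl
    simp [AffineMap.lineMap_apply, Function.comp]
    abel_nf
  have hs := hφ.le_slope_of_hasDerivAt (Set.mem_univ (0:ℝ)) (Set.mem_univ (1:ℝ))
    one_pos hd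
  rw [slope_def_field] at hs
  have h1 : x + (y - x) = y := by abel
  simp only [zero_smul, add_zero, one_smul, h1, sub_zero, div_one] at hs
  linarith

lemma descent_lemma (f : E → ℝ) (g : E → E) (L : ℝ) (hL : 0 < L)
    (hdiff : ∀ z, HasGradientAt f (g z) z)
    (hsmooth : ∀ a b, ‖g a - g b‖ ≤ L * ‖a - b‖) (x y : E) :
    f y ≤ f x + (inner ℝ (g x) (y - x) : ℝ) + L / 2 * ‖y - x‖ ^ 2 := by
  set u := y - x with hu
  set φ : ℝ → ℝ := fun t => f (x + t • u) with hφ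
  have hd : ∀ t : ℝ, HasDerivAt φ (inner ℝ (g (x + t • u)) u : ℝ) t := fun t =>
    line_hasDerivAt f x u t (hdiff _)
  set c : ℝ := (inner ℝ (g x) u : ℝ) with hc
  set ψ : ℝ → ℝ := fun t => c * t + L * ‖u‖ ^ 2 * t ^ 2 / 2 - φ t with hψ
  have hdψ : ∀ t : ℝ, HasDerivAt ψ (c + L * ‖u‖ ^ 2 * t - (inner ℝ (g (x + t • u)) u : ℝ)) t := by
    intro t
    have h1 : HasDerivAt (fun t : ℝ => c * t) c t := by
      simpa using (hasDerivAt_id t).const_mul c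
    have h2 : HasDerivAt (fun t : ℝ => L * ‖u‖ ^ 2 * t ^ 2 / 2) (L * ‖u‖ ^ 2 * t) t := by
      have := ((hasDerivAt_pow 2 t).const_mul (L * ‖u‖ ^ 2)).div_const 2
      convert this using 1
      iterate 2 rfl
      norm_num
      ring
    exact (h1.add h2).sub (hd t)
  have hmono : MonotoneOn ψ (Set.Icc (0:ℝ) 1) := by
    apply monotoneOn_of_hasDerivWithinAt_nonneg (convex_Icc 0 1)
      (fun t _ => (hdψ t).continuousAt.continuousWithinAt)
      (fun t _ => (hdψ t).hasDerivWithinAt)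
    intro t ht
    rw [interior_Icc] at ht
    have hb : (inner ℝ (g (x + t • u) - g x) u : ℝ) ≤ L * t * ‖u‖ ^ 2 := by
      calc (inner ℝ (g (x + t • u) - g x) u : ℝ) ≤ ‖g (x + t • u) - g x‖ * ‖u‖ :=
            real_inner_le_norm _ _
        _ ≤ (L * ‖(x + t • u) - x‖) * ‖u‖ :=
            mul_le_mul_of_nonneg_right (hsmooth _ _) (norm_nonneg _)
        _ = L * t * ‖u‖ ^ 2 := by
            rw [add_sub_cancel_left, norm_smul, Real.norm_eq_abs, abs_of_pos ht.1]
            ring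
    rw [inner_sub_left] at hb
    linarith
  have key := hmono (Set.left_mem_Icc.2 zero_le_one) (Set.right_mem_Icc.2 zero_le_one) zero_le_one
  have hψ0 : ψ 0 = -f x := by simp [hψ, hφ]
  have hψ1 : ψ 1 = c + L * ‖u‖ ^ 2 / 2 - f y := by
    have h1 : x + (1:ℝ) • u = y := by rw [one_smul, hu]; abel
    simp only [hψ, hφ, h1, mul_one, one_pow]
  rw [hψ0, hψ1] at key
  linarith

lemma avg_hasGradientAt {n : ℕ} (f : Fin n → E → ℝ) (grad : Fin n → E → E)
    (hdiff : ∀ i z, HasGradientAt (f i) (grad i z) z) (z : E) :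
    HasGradientAt (fun w => (n:ℝ)⁻¹ * ∑ i, f i w) ((n:ℝ)⁻¹ • ∑ i, grad i z) z := by
  have h1 : HasFDerivAt (fun w => ∑ i, f i w)
      (∑ i, InnerProductSpace.toDual ℝ E (grad i z)) z :=
    HasFDerivAt.fun_sum (fun i _ => (hdiff i z).hasFDerivAt)
  have h2 := h1.const_mul ((n:ℝ)⁻¹)
  rw [hasGradientAt_iff_hasFDerivAt]
  convert h2 using 1
  · rfl
  simp [map_sum, map_smul]

end Aux

set_option maxHeartbeats 1000000


/-- **Deterministic one-step contraction of the averaged iterate.**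
Let `f₁, …, fₙ : ℝ^d → ℝ` be convex and `L`-smooth, `f = (1/n) ∑ fᵢ`, and `x*` a global
minimizer of `f`.  If `0 < γ < 1/(4L)`, then for any points `x₁, …, xₙ` with average `x̄`,
`‖x̄ − x* − (γ/n) ∑ᵢ ∇fᵢ(xᵢ)‖² ≤ ‖x̄ − x*‖² − γ (f(x̄) − f(x*)) + (3γL/(2n)) ∑ᵢ ‖x̄ − xᵢ‖²`. -/
theorem one_step_contraction_of_averaged_iterate
    (d n : ℕ) (hn : 0 < n)
    (f : Fin n → EuclideanSpace ℝ (Fin d) → ℝ)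
    (grad : Fin n → EuclideanSpace ℝ (Fin d) → EuclideanSpace ℝ (Fin d))
    (L : ℝ) (hL : 0 < L)
    (hdiff : ∀ i z, HasGradientAt (f i) (grad i z) z)
    (hconv : ∀ i, ConvexOn ℝ Set.univ (f i))
    (hsmooth : ∀ i y z, ‖grad i y - grad i z‖ ≤ L * ‖y - z‖)
    (xstar : EuclideanSpace ℝ (Fin d))
    (hmin : ∀ z, (n : ℝ)⁻¹ * ∑ i, f i xstar ≤ (n : ℝ)⁻¹ * ∑ i, f i z)
    (γ : ℝ) (hγ0 : 0 < γ) (hγ : γ < 1 / (4 * L))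
    (x : Fin n → EuclideanSpace ℝ (Fin d)) :
    ‖(n : ℝ)⁻¹ • (∑ j, x j) - xstar - (γ / n) • ∑ i, grad i (x i)‖ ^ 2 ≤
      ‖(n : ℝ)⁻¹ • (∑ j, x j) - xstar‖ ^ 2
      - γ * ((n : ℝ)⁻¹ * ∑ i, f i ((n : ℝ)⁻¹ • ∑ j, x j)
          - (n : ℝ)⁻¹ * ∑ i, f i xstar)
      + 3 * γ * L / (2 * n) * ∑ i, ‖(n : ℝ)⁻¹ • (∑ j, x j) - x i‖ ^ 2 := by
  have hn' : (0:ℝ) < n := Nat.cast_pos.2 hn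
  have hnne : (n:ℝ) ≠ 0 := ne_of_gt hn'
  set xb : EuclideanSpace ℝ (Fin d) := (n : ℝ)⁻¹ • (∑ j, x j) with hxb
  set w : EuclideanSpace ℝ (Fin d) := xb - xstar with hw
  set S : ℝ := ∑ i, ‖xb - x i‖ ^ 2 with hS
  have hS0 : 0 ≤ S := Finset.sum_nonneg (fun i _ => by positivity)
  set D : ℝ := (n : ℝ)⁻¹ * ∑ i, f i xb - (n : ℝ)⁻¹ * ∑ i, f i xstar with hD
  have hD0 : 0 ≤ D := sub_nonneg.2 (hmin xb)
  set gb : EuclideanSpace ℝ (Fin d) := (n : ℝ)⁻¹ • ∑ i, grad i (x i) with hgb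
  set g : EuclideanSpace ℝ (Fin d) := (n : ℝ)⁻¹ • ∑ i, grad i xb with hg
  set s : ℝ := (n:ℝ)⁻¹ * S with hs
  have hs0 : 0 ≤ s := by positivity
  -- Step 1: lower bound on ⟪gb, w⟫
  have hI : D - L / 2 * s ≤ (inner ℝ gb w : ℝ) := by
    have hper : ∀ i, f i xb - f i xstar - L / 2 * ‖xb - x i‖ ^ 2 ≤
        (inner ℝ (grad i (x i)) w : ℝ) := by
      intro i
      have hA := convex_grad_ineq (f i) (hconv i) (x i) xstar (grad i (x i)) (hdiff i (x i))
      have hB := descent_lemma (f i) (grad i) L hL (hdiff i) (hsmooth i) (x i) xb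
      have hsplit : (inner ℝ (grad i (x i)) w : ℝ) =
          (inner ℝ (grad i (x i)) (xb - x i) : ℝ) - (inner ℝ (grad i (x i)) (xstar - x i) : ℝ) := by
        rw [← inner_sub_right]
        congr 1
        rw [hw]; abel
      rw [hsplit]
      linarith
    have hsum : ∑ i, (f i xb - f i xstar - L / 2 * ‖xb - x i‖ ^ 2) ≤
        ∑ i, (inner ℝ (grad i (x i)) w : ℝ) :=
      Finset.sum_le_sum (fun i _ => hper i)
    have hsum2 : (inner ℝ gb w : ℝ) = (n:ℝ)⁻¹ * ∑ i, (inner ℝ (grad i (x i)) w : ℝ) := by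
      rw [hgb, real_inner_smul_left, sum_inner]
    rw [hsum2]
    have hexp : ∑ i, (f i xb - f i xstar - L / 2 * ‖xb - x i‖ ^ 2) =
        ∑ i, f i xb - ∑ i, f i xstar - L / 2 * S := by
      rw [Finset.sum_sub_distrib, Finset.sum_sub_distrib, ← Finset.mul_sum, hS]
    rw [hexp] at hsum
    have := mul_le_mul_of_nonneg_left hsum (by positivity : (0:ℝ) ≤ (n:ℝ)⁻¹)
    rw [hD, hs]
    nlinarith [this]
  -- gradient of the average
  have havg := avg_hasGradientAt f grad hdiff
  have hgsmooth : ∀ a b : EuclideanSpace ℝ (Fin d), ‖((n:ℝ)⁻¹ • ∑ i, grad i a) - ((n:ℝ)⁻¹ • ∑ i, grad i b)‖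
      ≤ L * ‖a - b‖ := by
    intro a b
    rw [← smul_sub, norm_smul, ← Finset.sum_sub_distrib]
    have h1 : ‖∑ i, (grad i a - grad i b)‖ ≤ ∑ i : Fin n, L * ‖a - b‖ :=
      (norm_sum_le _ _).trans (Finset.sum_le_sum (fun i _ => hsmooth i a b))
    rw [Finset.sum_const, card_univ, Fintype.card_fin, nsmul_eq_mul] at h1
    have : ‖(n:ℝ)⁻¹‖ = (n:ℝ)⁻¹ := by
      rw [Real.norm_eq_abs, abs_of_pos (by positivity)]
    rw [this]
    calc (n:ℝ)⁻¹ * ‖∑ i, (grad i a - grad i b)‖ ≤ (n:ℝ)⁻¹ * ((n:ℝ) * (L * ‖a - b‖)) :=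
          mul_le_mul_of_nonneg_left h1 (by positivity)
      _ = L * ‖a - b‖ := by field_simp
  -- Step 2a: ‖g‖² ≤ 2 L D
  have hgD : ‖g‖ ^ 2 ≤ 2 * L * D := by
    have hdesc := descent_lemma (fun z => (n:ℝ)⁻¹ * ∑ i, f i z)
      (fun z => (n:ℝ)⁻¹ • ∑ i, grad i z) L hL havg hgsmooth xb (xb - L⁻¹ • g)
    have hy : xb - L⁻¹ • g - xb = -(L⁻¹ • g) := by abel
    rw [hy] at hdesc
    have hinner : (inner ℝ ((n:ℝ)⁻¹ • ∑ i, grad i xb) (-(L⁻¹ • g)) : ℝ) = -(L⁻¹ * ‖g‖^2) := by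
      rw [inner_neg_right, real_inner_smul_right, ← hg, real_inner_self_eq_norm_sq]
    have hnorm : ‖-(L⁻¹ • g)‖ ^ 2 = L⁻¹^2 * ‖g‖^2 := by
      rw [norm_neg, norm_smul, Real.norm_eq_abs, abs_of_pos (by positivity), mul_pow]
    rw [hinner, hnorm] at hdesc
    have hmin' := hmin (xb - L⁻¹ • g)
    have hLne : L ≠ 0 := ne_of_gt hL
    have : L / 2 * (L⁻¹ ^ 2 * ‖g‖ ^ 2) = ‖g‖^2 / (2*L) := by field_simp
    rw [this] at hdesc
    have h2 : (n:ℝ)⁻¹ * ∑ i, f i xstar ≤ (n:ℝ)⁻¹ * ∑ i, f i xb - L⁻¹ * ‖g‖^2 + ‖g‖^2/(2*L) :=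
      le_trans hmin' hdesc
    rw [hD]
    have hL2 : L⁻¹ * ‖g‖^2 - ‖g‖^2/(2*L) = ‖g‖^2/(2*L) := by field_simp; ring
    have h3 : ‖g‖^2/(2*L) ≤ (n:ℝ)⁻¹ * ∑ i, f i xb - (n:ℝ)⁻¹ * ∑ i, f i xstar := by linarith
    rw [div_le_iff₀ (by positivity : (0:ℝ) < 2*L)] at h3
    linarith
  -- Step 2b: ‖gb - g‖² ≤ L² s
  have hvar : ‖gb - g‖ ^ 2 ≤ L ^ 2 * s := by
    have h1 : ‖gb - g‖ ≤ (n:ℝ)⁻¹ * ∑ i, (L * ‖xb - x i‖) := by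
      rw [hgb, hg, ← smul_sub, ← Finset.sum_sub_distrib, norm_smul, Real.norm_eq_abs,
        abs_of_pos (by positivity : (0:ℝ) < (n:ℝ)⁻¹)]
      refine mul_le_mul_of_nonneg_left ?_ (by positivity)
      refine (norm_sum_le _ _).trans (Finset.sum_le_sum (fun i _ => ?_))
      calc ‖grad i (x i) - grad i xb‖ ≤ L * ‖x i - xb‖ := hsmooth i _ _
        _ = L * ‖xb - x i‖ := by rw [norm_sub_rev]
    have h2 : (∑ i, (L * ‖xb - x i‖)) ^ 2 ≤ (n:ℝ) * ∑ i, (L * ‖xb - x i‖)^2 := by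
      have := sq_sum_le_card_mul_sum_sq (s := (univ : Finset (Fin n)))
        (f := fun i => L * ‖xb - x i‖)
      simpa [card_univ] using this
    have h3 : ∑ i, (L * ‖xb - x i‖)^2 = L^2 * S := by
      rw [hS, Finset.mul_sum]
      congr 1; ext i; ring
    have h4 : ‖gb - g‖ ^ 2 ≤ ((n:ℝ)⁻¹ * ∑ i, (L * ‖xb - x i‖)) ^ 2 := by
      have hnn : (0:ℝ) ≤ ‖gb - g‖ := norm_nonneg _
      exact pow_le_pow_left₀ hnn h1 2
    rw [hs]
    calc ‖gb - g‖ ^ 2 ≤ ((n:ℝ)⁻¹)^2 * (∑ i, (L * ‖xb - x i‖)) ^ 2 := by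
          rw [← mul_pow]; exact h4
      _ ≤ ((n:ℝ)⁻¹)^2 * ((n:ℝ) * (L^2 * S)) := by
          rw [← h3]; exact mul_le_mul_of_nonneg_left h2 (by positivity)
      _ = L ^ 2 * ((n:ℝ)⁻¹ * S) := by field_simp
  -- Step 2c: ‖gb‖² ≤ 2 L² s + 4 L D
  have hG : ‖gb‖ ^ 2 ≤ 2 * L^2 * s + 4 * L * D := by
    have h1 : ‖gb‖ ≤ ‖gb - g‖ + ‖g‖ := by
      calc ‖gb‖ = ‖(gb - g) + g‖ := by congr 1; abel
        _ ≤ ‖gb - g‖ + ‖g‖ := norm_add_le _ _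
    nlinarith [sq_nonneg (‖gb - g‖ - ‖g‖), norm_nonneg gb, norm_nonneg (gb - g), norm_nonneg g,
      hvar, hgD]
  -- Step 3: expand and conclude
  have hrw : ((γ / n) • ∑ i, grad i (x i) : EuclideanSpace ℝ (Fin d)) = γ • gb := by
    rw [hgb, smul_smul, div_eq_mul_inv]
  have hexp : ‖w - γ • gb‖ ^ 2 = ‖w‖^2 - 2 * γ * (inner ℝ gb w : ℝ) + γ^2 * ‖gb‖^2 := by
    rw [norm_sub_sq_real, real_inner_smul_right, norm_smul, Real.norm_eq_abs,
      abs_of_pos hγ0, mul_pow, real_inner_comm]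
    ring
  have hsrw : 3 * γ * L / (2 * n) * S = 3 * γ * L / 2 * s := by
    rw [hs]; field_simp
  have hγL : γ * L ≤ 1/4 := by
    rw [lt_div_iff₀ (by positivity)] at hγ
    nlinarith
  calc ‖xb - xstar - (γ / n) • ∑ i, grad i (x i)‖ ^ 2
      = ‖w - γ • gb‖ ^ 2 := by rw [hrw, hw]
    _ = ‖w‖^2 - 2 * γ * (inner ℝ gb w : ℝ) + γ^2 * ‖gb‖^2 := hexp
    _ ≤ ‖w‖^2 - γ * D + 3 * γ * L / 2 * s := by
        set I : ℝ := (inner ℝ gb w : ℝ) with hI'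
        set G : ℝ := ‖gb‖^2 with hG'
        have A1 : 2*γ*(D - L/2*s) ≤ 2*γ*I := mul_le_mul_of_nonneg_left hI (by positivity)
        have A2 : γ^2*G ≤ γ^2*(2*L^2*s + 4*L*D) := mul_le_mul_of_nonneg_left hG (by positivity)
        have P1 : 0 ≤ γ*D*(1-4*(γ*L)) := mul_nonneg (mul_nonneg hγ0.le hD0) (by linarith)
        have P2 : 0 ≤ (γ*L*s)*(1-4*(γ*L)) :=
          mul_nonneg (mul_nonneg (mul_nonneg hγ0.le hL.le) hs0) (by linarith)
        clear_value xb w S D gb g s I G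
        nlinarith [A1, A2, P1, P2]
    _ = ‖w‖^2 - γ * D + 3 * γ * L / (2 * n) * S := by rw [hsrw]
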